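/- For 1 ≤ k ≤ ℓ−1, r ≥ 2 and 1 ≤ i ≤ k < j ≤ ℓ: the restriction of A^k_ℓ(r) to ker(x_i − ζ x_j) is isomorphic to A^k_{ℓ−1}(r); and for k < i < j ≤ ℓ, the restriction of A^k_ℓ(r) to ker(x_i − ζ x_j) is isomorphic to A^{k+1}_{ℓ−1}(r). -/

import Mathlib

open scoped Classical

noncomputable section

namespace ArrPaper

/-- A (linear) hyperplane in a complex vector space. -/
def IsHyperplane {V : Type*} [AddCommGroup V] [Module ℂ V] (H : Submodule ℂ V) : Prop :=
  ∃ f : V →ₗ[ℂ] ℂ, f ≠ 0 ∧ H = LinearMap.ker f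

/-- The linear polynomial associated to a linear functional on `ℂ^ℓ`. -/
def linForm {ℓ : ℕ} (φ : (Fin ℓ → ℂ) →ₗ[ℂ] ℂ) : MvPolynomial (Fin ℓ) ℂ :=
  ∑ i, MvPolynomial.C (φ (Pi.single i 1)) * MvPolynomial.X i

/-- A derivation `θ = ∑ θᵢ ∂/∂xᵢ` applied to a polynomial. -/
def derApply {ℓ : ℕ} (θ : Fin ℓ → MvPolynomial (Fin ℓ) ℂ) (p : MvPolynomial (Fin ℓ) ℂ) :
    MvPolynomial (Fin ℓ) ℂ :=
  ∑ i, θ i * MvPolynomial.pderiv i p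

/-- The module `D(A)` of logarithmic derivations of an arrangement, as a set. -/
def DerSet {ℓ : ℕ} (A : Finset (Submodule ℂ (Fin ℓ → ℂ))) :
    Set (Fin ℓ → MvPolynomial (Fin ℓ) ℂ) :=
  {θ | ∀ H ∈ A, ∀ φ : (Fin ℓ → ℂ) →ₗ[ℂ] ℂ, LinearMap.ker φ = H →
        ∃ q, derApply θ (linForm φ) = linForm φ * q}

/-- `A` is a free arrangement with multiset of exponents `E`: `D(A)` admits a
homogeneous basis whose polynomial degrees form the multiset `E`. -/
def IsFreeWithExp {ℓ : ℕ} (A : Finset (Submodule ℂ (Fin ℓ → ℂ))) (E : Multiset ℕ) : Prop :=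
  ∃ (θ : Fin ℓ → Fin ℓ → MvPolynomial (Fin ℓ) ℂ) (d : Fin ℓ → ℕ),
    E = ↑(List.ofFn d) ∧
    (∀ i j, MvPolynomial.IsHomogeneous (θ i j) (d i)) ∧
    (∀ i, θ i ∈ DerSet A) ∧
    (∀ η ∈ DerSet A, ∃! c : Fin ℓ → MvPolynomial (Fin ℓ) ℂ,
       η = fun j => ∑ i, c i * θ i j)

/-- `A` is a free arrangement. -/
def IsFree {ℓ : ℕ} (A : Finset (Submodule ℂ (Fin ℓ → ℂ))) : Prop :=
  ∃ E, IsFreeWithExp A E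

/-- The restriction `A^X` of an arrangement to `X ∈ L(A)`, transported to a
coordinate space via a linear isomorphism `e : X ≃ ℂ^p`. -/
def restrictTo {ℓ p : ℕ} (A : Finset (Submodule ℂ (Fin ℓ → ℂ)))
    (X : Submodule ℂ (Fin ℓ → ℂ)) (e : X ≃ₗ[ℂ] (Fin p → ℂ)) :
    Finset (Submodule ℂ (Fin p → ℂ)) :=
  (A.filter fun H => ¬ X ≤ H).image fun H =>
    (H.comap X.subtype).map e.toLinearMap

/-- The class of inductively free arrangements. -/
inductive IndFree : ∀ ℓ : ℕ, Finset (Submodule ℂ (Fin ℓ → ℂ)) → Prop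
  | empty (ℓ : ℕ) : IndFree ℓ ∅
  | add {ℓ : ℕ} (A : Finset (Submodule ℂ (Fin ℓ → ℂ))) (H₀ : Submodule ℂ (Fin ℓ → ℂ))
      (hH₀ : H₀ ∈ A) (e : H₀ ≃ₗ[ℂ] (Fin (ℓ - 1) → ℂ)) (E' E'' : Multiset ℕ)
      (h' : IndFree ℓ (A.erase H₀))
      (h'' : IndFree (ℓ - 1) (restrictTo A H₀ e))
      (hE' : IsFreeWithExp (A.erase H₀) E')
      (hE'' : IsFreeWithExp (restrictTo A H₀ e) E'')
      (hle : E'' ≤ E') : IndFree ℓ A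

/-- The class of recursively free arrangements. -/
inductive RecFree : ∀ ℓ : ℕ, Finset (Submodule ℂ (Fin ℓ → ℂ)) → Prop
  | empty (ℓ : ℕ) : RecFree ℓ ∅
  | add {ℓ : ℕ} (A : Finset (Submodule ℂ (Fin ℓ → ℂ))) (H₀ : Submodule ℂ (Fin ℓ → ℂ))
      (hH₀ : H₀ ∈ A) (e : H₀ ≃ₗ[ℂ] (Fin (ℓ - 1) → ℂ)) (E' E'' : Multiset ℕ)
      (h' : RecFree ℓ (A.erase H₀))
      (h'' : RecFree (ℓ - 1) (restrictTo A H₀ e))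
      (hE' : IsFreeWithExp (A.erase H₀) E')
      (hE'' : IsFreeWithExp (restrictTo A H₀ e) E'')
      (hle : E'' ≤ E') : RecFree ℓ A
  | del {ℓ : ℕ} (A : Finset (Submodule ℂ (Fin ℓ → ℂ))) (H₀ : Submodule ℂ (Fin ℓ → ℂ))
      (hH₀ : H₀ ∈ A) (e : H₀ ≃ₗ[ℂ] (Fin (ℓ - 1) → ℂ)) (E E'' : Multiset ℕ)
      (hA : RecFree ℓ A)
      (h'' : RecFree (ℓ - 1) (restrictTo A H₀ e))
      (hE : IsFreeWithExp A E)
      (hE'' : IsFreeWithExp (restrictTo A H₀ e) E'')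
      (hle : E'' ≤ E) : RecFree ℓ (A.erase H₀)

/-- The intersection lattice `L(A)` of an arrangement. -/
def latticeOf {ℓ : ℕ} (A : Finset (Submodule ℂ (Fin ℓ → ℂ))) :
    Set (Submodule ℂ (Fin ℓ → ℂ)) :=
  {X | ∃ B : Finset (Submodule ℂ (Fin ℓ → ℂ)), B ⊆ A ∧ X = B.inf id}

/-- `A` is hereditarily inductively free: every restriction `A^X`, `X ∈ L(A)`,
is inductively free. -/
def HeredIndFree {ℓ : ℕ} (A : Finset (Submodule ℂ (Fin ℓ → ℂ))) : Prop :=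
  ∀ X ∈ latticeOf A, ∀ (q : ℕ) (e : X ≃ₗ[ℂ] (Fin q → ℂ)), IndFree q (restrictTo A X e)

/-- A primitive `r`-th root of unity. -/
def zeta (r : ℕ) : ℂ := Complex.exp (2 * Real.pi * Complex.I / r)

/-- The hyperplane `ker (xᵢ - ζⁿ xⱼ)`. -/
def hypIJ {ℓ : ℕ} (r : ℕ) (i j : Fin ℓ) (n : ℕ) : Submodule ℂ (Fin ℓ → ℂ) :=
  LinearMap.ker ((LinearMap.proj i : (Fin ℓ → ℂ) →ₗ[ℂ] ℂ)
    - (zeta r ^ n) • (LinearMap.proj j : (Fin ℓ → ℂ) →ₗ[ℂ] ℂ))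

/-- The intermediate arrangement `A^k_ℓ(r)`, with hyperplanes `ker xᵢ` (`i < k`,
0-based) and `ker (xᵢ - ζⁿ xⱼ)` (`i < j`, `n < r`). -/
def interArr (r ℓ k : ℕ) : Finset (Submodule ℂ (Fin ℓ → ℂ)) :=
  (((Finset.univ : Finset (Fin ℓ)).filter fun i : Fin ℓ => (i : ℕ) < k).image
      fun i => LinearMap.ker (LinearMap.proj i : (Fin ℓ → ℂ) →ₗ[ℂ] ℂ))
  ∪ (((Finset.univ : Finset (Fin ℓ × Fin ℓ × Fin r)).filter fun p => p.1 < p.2.1).image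
      fun p => hypIJ r p.1 p.2.1 (p.2.2 : ℕ))

/-- The multiset of exponents `{1, r+1, …, (ℓ-2)r+1, (ℓ-1)r - ℓ + k + 1}` of `A^k_ℓ(r)`. -/
def interExp (r ℓ k : ℕ) : Multiset ℕ :=
  ((ℓ - 1) * r - ℓ + k + 1) ::ₘ ((Multiset.range (ℓ - 1)).map fun m => m * r + 1)

/-- The product arrangement `A₁ × A₂` in coordinates, on `ℂ^{ℓ₁+ℓ₂}`. -/
def prodArr {ℓ₁ ℓ₂ : ℕ} (A₁ : Finset (Submodule ℂ (Fin ℓ₁ → ℂ)))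
    (A₂ : Finset (Submodule ℂ (Fin ℓ₂ → ℂ))) :
    Finset (Submodule ℂ (Fin (ℓ₁ + ℓ₂) → ℂ)) :=
  (A₁.image fun H => H.comap (LinearMap.funLeft ℂ ℂ (Fin.castAdd ℓ₂)))
  ∪ (A₂.image fun H => H.comap (LinearMap.funLeft ℂ ℂ (Fin.natAdd ℓ₁)))

end ArrPaper
namespace ArrPaper

open LinearMap

section Aux

variable {r : ℕ}

lemma zeta_prim (hr : r ≠ 0) : IsPrimitiveRoot (zeta r) r :=
  Complex.isPrimitiveRoot_exp r hr

lemma zeta_pow_r (hr : r ≠ 0) : zeta r ^ r = 1 := (zeta_prim hr).pow_eq_one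

lemma zeta_ne_zero : zeta r ≠ 0 := Complex.exp_ne_zero _

lemma zeta_pow_mod (hr : r ≠ 0) (a : ℕ) : zeta r ^ (a % r) = zeta r ^ a := by
  conv_rhs => rw [← Nat.div_add_mod a r]
  rw [pow_add, pow_mul, zeta_pow_r hr, one_pow, one_mul]

lemma mem_hypIJ {p : ℕ} {a b : Fin p} {n : ℕ} {v : Fin p → ℂ} :
    v ∈ hypIJ r a b n ↔ v a - zeta r ^ n * v b = 0 := by
  simp [hypIJ, LinearMap.mem_ker]

lemma ker_proj_ne_top {p : ℕ} (u : Fin p) :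
    LinearMap.ker (proj u : (Fin p → ℂ) →ₗ[ℂ] ℂ) ≠ ⊤ := by
  intro h
  have h1 : (Pi.single u 1 : Fin p → ℂ) ∈
      LinearMap.ker (proj u : (Fin p → ℂ) →ₗ[ℂ] ℂ) := h.symm ▸ Submodule.mem_top
  simp [LinearMap.mem_ker] at h1

lemma hyp_ne_top {p : ℕ} (u v : Fin p) (c : ℂ) (huv : u ≠ v) :
    LinearMap.ker ((proj u : (Fin p → ℂ) →ₗ[ℂ] ℂ) - c • proj v) ≠ ⊤ := by
  intro h
  have h1 : (Pi.single u 1 : Fin p → ℂ) ∈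
      LinearMap.ker ((proj u : (Fin p → ℂ) →ₗ[ℂ] ℂ) - c • proj v) :=
    h.symm ▸ Submodule.mem_top
  simp [LinearMap.mem_ker, Pi.single_apply, Ne.symm huv] at h1

lemma coe_succAbove_lt {n : ℕ} (p : Fin (n + 1)) (c : Fin n) (h : (c : ℕ) < (p : ℕ)) :
    ((p.succAbove c : Fin (n + 1)) : ℕ) = c := by
  rw [Fin.succAbove_of_castSucc_lt _ _ (by rwa [Fin.lt_def, Fin.coe_castSucc])]
  exact Fin.coe_castSucc c

lemma coe_succAbove_ge {n : ℕ} (p : Fin (n + 1)) (c : Fin n) (h : (p : ℕ) ≤ (c : ℕ)) :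
    ((p.succAbove c : Fin (n + 1)) : ℕ) = c + 1 := by
  rw [Fin.succAbove_of_le_castSucc _ _ (by rwa [Fin.le_def, Fin.coe_castSucc])]
  exact Fin.val_succ c

lemma succAbove_coe_or {n : ℕ} (p : Fin (n + 1)) (c : Fin n) :
    ((c : ℕ) < (p : ℕ) ∧ ((p.succAbove c : Fin (n + 1)) : ℕ) = c) ∨
      ((p : ℕ) ≤ (c : ℕ) ∧ ((p.succAbove c : Fin (n + 1)) : ℕ) = (c : ℕ) + 1) := by
  rcases lt_or_ge (c : ℕ) (p : ℕ) with h | h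
  · exact Or.inl ⟨h, coe_succAbove_lt p c h⟩
  · exact Or.inr ⟨h, coe_succAbove_ge p c h⟩

variable {m : ℕ}

def secMap (pivot : Fin (m + 2)) (c : ℂ) (t : Fin (m + 1)) (τ : Fin (m + 1) → Fin (m + 1)) :
    (Fin (m + 1) → ℂ) →ₗ[ℂ] (Fin (m + 2) → ℂ) where
  toFun y := Fin.insertNth pivot (c * y t) (fun d => y (τ d))
  map_add' y z := by
    funext a
    rcases eq_or_ne a pivot with rfl | ha
    · simp [mul_add]
    · obtain ⟨d, rfl⟩ := Fin.exists_succAbove_eq ha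
      simp
  map_smul' cz y := by
    funext a
    rcases eq_or_ne a pivot with rfl | ha
    · simp [smul_eq_mul]; ring
    · obtain ⟨d, rfl⟩ := Fin.exists_succAbove_eq ha
      simp

lemma secMap_pivot (pivot : Fin (m + 2)) (c : ℂ) (t : Fin (m + 1))
    (τ : Fin (m + 1) → Fin (m + 1)) (y : Fin (m + 1) → ℂ) :
    secMap pivot c t τ y pivot = c * y t := by
  simp [secMap]

lemma secMap_succAbove (pivot : Fin (m + 2)) (c : ℂ) (t : Fin (m + 1))
    (τ : Fin (m + 1) → Fin (m + 1)) (y : Fin (m + 1) → ℂ) (d : Fin (m + 1)) :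
    secMap pivot c t τ y (pivot.succAbove d) = y (τ d) := by
  simp [secMap]

lemma proj_comp_secMap_pivot (pivot : Fin (m + 2)) (c : ℂ) (t : Fin (m + 1))
    (τ : Fin (m + 1) → Fin (m + 1)) :
    (proj pivot : (Fin (m + 2) → ℂ) →ₗ[ℂ] ℂ).comp (secMap pivot c t τ)
      = c • (proj t : (Fin (m + 1) → ℂ) →ₗ[ℂ] ℂ) := by
  ext y
  simp [secMap_pivot]

lemma proj_comp_secMap_succAbove (pivot : Fin (m + 2)) (c : ℂ) (t : Fin (m + 1))
    (τ : Fin (m + 1) → Fin (m + 1)) (d : Fin (m + 1)) :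
    (proj (pivot.succAbove d) : (Fin (m + 2) → ℂ) →ₗ[ℂ] ℂ).comp (secMap pivot c t τ)
      = (proj (τ d) : (Fin (m + 1) → ℂ) →ₗ[ℂ] ℂ) := by
  ext y
  simp [secMap_succAbove]

lemma comap_ker_proj (T : (Fin (m + 1) → ℂ) →ₗ[ℂ] (Fin (m + 2) → ℂ)) (a : Fin (m + 2)) :
    (LinearMap.ker (proj a : (Fin (m + 2) → ℂ) →ₗ[ℂ] ℂ)).comap T
      = LinearMap.ker ((proj a : (Fin (m + 2) → ℂ) →ₗ[ℂ] ℂ).comp T) :=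
  (LinearMap.ker_comp _ _).symm

lemma comap_hypIJ (T : (Fin (m + 1) → ℂ) →ₗ[ℂ] (Fin (m + 2) → ℂ)) (a b : Fin (m + 2)) (n : ℕ) :
    (hypIJ r a b n).comap T
      = LinearMap.ker ((proj a : (Fin (m + 2) → ℂ) →ₗ[ℂ] ℂ).comp T
          - (zeta r ^ n) • (proj b : (Fin (m + 2) → ℂ) →ₗ[ℂ] ℂ).comp T) := by
  rw [hypIJ, ← LinearMap.ker_comp]
  congr 1

lemma kerD_swap (hr : r ≠ 0) {p : ℕ} (u v : Fin p) (n : ℕ) :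
    LinearMap.ker ((proj v : (Fin p → ℂ) →ₗ[ℂ] ℂ) - (zeta r ^ (n * (r - 1))) • proj u)
      = LinearMap.ker ((proj u : (Fin p → ℂ) →ₗ[ℂ] ℂ) - (zeta r ^ n) • proj v) := by
  have hz : zeta r ^ (n * (r - 1)) * zeta r ^ n = 1 := by
    rw [← pow_add]
    have h1 : n * (r - 1) + n = r * n := by
      have : 1 ≤ r := by omega
      cases r with
      | zero => omega
      | succ r' => simp only [Nat.succ_sub_one]; ring
    rw [h1, pow_mul, zeta_pow_r hr, one_pow]
  have key : (proj v : (Fin p → ℂ) →ₗ[ℂ] ℂ) - (zeta r ^ (n * (r - 1))) • proj u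
      = (-(zeta r ^ (n * (r - 1)))) • ((proj u : (Fin p → ℂ) →ₗ[ℂ] ℂ) - (zeta r ^ n) • proj v) := by
    refine LinearMap.ext fun y => ?_
    simp only [LinearMap.sub_apply, LinearMap.smul_apply, LinearMap.proj_apply, smul_eq_mul,
      LinearMap.neg_apply]
    linear_combination (-(y v)) * hz
  rw [key, LinearMap.ker_smul _ _ (neg_ne_zero.2 (pow_ne_zero _ zeta_ne_zero))]


lemma C_mem {p K : ℕ} (u : Fin p) (hu : (u : ℕ) < K) :
    LinearMap.ker (proj u : (Fin p → ℂ) →ₗ[ℂ] ℂ) ∈ interArr r p K :=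
  Finset.mem_union_left _
    (Finset.mem_image.2 ⟨u, Finset.mem_filter.2 ⟨Finset.mem_univ _, hu⟩, rfl⟩)

lemma D_mem {p K : ℕ} {u v : Fin p} (huv : u < v) {n : ℕ} (hn : n < r) :
    hypIJ r u v n ∈ interArr r p K :=
  Finset.mem_union_right _
    (Finset.mem_image.2 ⟨⟨u, v, ⟨n, hn⟩⟩, Finset.mem_filter.2 ⟨Finset.mem_univ _, huv⟩, rfl⟩)

lemma mem_interArr {p K : ℕ} {H : Submodule ℂ (Fin p → ℂ)} (hH : H ∈ interArr r p K) :
    (∃ u : Fin p, (u : ℕ) < K ∧ H = LinearMap.ker (proj u : (Fin p → ℂ) →ₗ[ℂ] ℂ)) ∨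
      (∃ u v : Fin p, ∃ n : Fin r, u < v ∧ H = hypIJ r u v (n : ℕ)) := by
  rcases Finset.mem_union.1 hH with h | h
  · obtain ⟨u, hu, h⟩ := Finset.mem_image.1 h
    exact Or.inl ⟨u, (Finset.mem_filter.1 hu).2, h.symm⟩
  · obtain ⟨⟨u, v, n⟩, huv, h⟩ := Finset.mem_image.1 h
    exact Or.inr ⟨u, v, n, (Finset.mem_filter.1 huv).2, h.symm⟩

lemma kerD_mem (hr : r ≠ 0) {p K : ℕ} {u v : Fin p} (huv : u ≠ v) (n : ℕ) :
    LinearMap.ker ((proj u : (Fin p → ℂ) →ₗ[ℂ] ℂ) - (zeta r ^ n) • proj v)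
      ∈ interArr r p K := by
  rcases lt_or_gt_of_ne huv with h | h
  · have he : LinearMap.ker ((proj u : (Fin p → ℂ) →ₗ[ℂ] ℂ) - (zeta r ^ n) • proj v)
        = hypIJ r u v (n % r) := by rw [hypIJ, zeta_pow_mod hr]
    rw [he]
    exact D_mem h (Nat.mod_lt _ (by omega))
  · rw [← kerD_swap hr u v n]
    have he : LinearMap.ker ((proj v : (Fin p → ℂ) →ₗ[ℂ] ℂ) - (zeta r ^ (n * (r - 1))) • proj u)
        = hypIJ r v u ((n * (r - 1)) % r) := by rw [hypIJ, zeta_pow_mod hr]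
    rw [he]
    exact D_mem h (Nat.mod_lt _ (by omega))

lemma le_iff_comap_top {q : ℕ} {H₀ H : Submodule ℂ (Fin q → ℂ)} {q' : ℕ}
    {T : (Fin q' → ℂ) →ₗ[ℂ] (Fin q → ℂ)}
    (hmem : ∀ y, T y ∈ H₀) (hsec : ∀ v ∈ H₀, ∃ y, T y = v) :
    H₀ ≤ H ↔ H.comap T = ⊤ := by
  constructor
  · intro h
    rw [Submodule.eq_top_iff']
    intro y
    exact h (hmem y)
  · intro h v hv
    obtain ⟨y, hy⟩ := hsec v hv
    rw [← hy]
    exact (Submodule.eq_top_iff'.1 h) y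

lemma map_inf_eq {q q' : ℕ} (π : (Fin q → ℂ) →ₗ[ℂ] (Fin q' → ℂ))
    (T : (Fin q' → ℂ) →ₗ[ℂ] (Fin q → ℂ)) (H₀ H : Submodule ℂ (Fin q → ℂ))
    (hmem : ∀ y, T y ∈ H₀) (hsec : ∀ v ∈ H₀, T (π v) = v) (hπT : ∀ y, π (T y) = y) :
    (H ⊓ H₀).map π = H.comap T := by
  ext x
  simp only [Submodule.mem_map, Submodule.mem_inf, Submodule.mem_comap]
  constructor
  · rintro ⟨v, ⟨hvH, hv0⟩, rfl⟩
    rw [hsec v hv0]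
    exact hvH
  · intro hx
    exact ⟨T x, ⟨hx, hmem x⟩, hπT x⟩


lemma main1 (hr : 2 ≤ r) {k : ℕ} {i j : Fin (m + 2)} {i' : Fin (m + 1)}
    (hij : i < j) (hik : (i : ℕ) < k) (hkj : k ≤ (j : ℕ))
    (hji' : j.succAbove i' = i) :
    ((interArr r (m + 2) k).filter fun H => ¬ hypIJ r i j 1 ≤ H).image
        (fun H => H.comap (secMap j (zeta r ^ (r - 1)) i' id))
      = interArr r (m + 1) k := by
  have hr0 : r ≠ 0 := by omega
  have hijn : (i : ℕ) < (j : ℕ) := hij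
  set T := secMap j (zeta r ^ (r - 1)) i' id with hT
  have hz1 : zeta r ^ 1 * zeta r ^ (r - 1) = 1 := by
    rw [← pow_add]
    have he : 1 + (r - 1) = r := by omega
    rw [he, zeta_pow_r hr0]
  have hTi : ∀ y, T y i = y i' := by
    intro y
    rw [← hji', hT]
    exact secMap_succAbove _ _ _ _ _ _
  have hTj : ∀ y, T y j = zeta r ^ (r - 1) * y i' := fun y => secMap_pivot _ _ _ _ _
  have hTmem : ∀ y, T y ∈ hypIJ r i j 1 := by
    intro y
    rw [mem_hypIJ, hTi, hTj]
    linear_combination (-(y i')) * hz1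
  have hTsec : ∀ v ∈ hypIJ r i j 1, T (fun d => v (j.succAbove d)) = v := by
    intro v hv
    rw [mem_hypIJ] at hv
    have hval : zeta r ^ (r - 1) * v i = v j := by
      linear_combination (zeta r ^ (r - 1)) * hv + (v j) * hz1
    show Fin.insertNth j (zeta r ^ (r - 1) * v (j.succAbove i'))
        (fun d => v (j.succAbove d)) = v
    rw [hji', hval]
    exact Fin.insertNth_self_removeNth j v
  have hle_iff : ∀ H : Submodule ℂ (Fin (m + 2) → ℂ),
      hypIJ r i j 1 ≤ H ↔ H.comap T = ⊤ :=
    fun H => le_iff_comap_top hTmem (fun v hv => ⟨_, hTsec v hv⟩)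
  have hi'c : (i' : ℕ) = (i : ℕ) := by
    rcases succAbove_coe_or j i' with ⟨h1, h2⟩ | ⟨h1, h2⟩ <;> rw [hji'] at h2 <;> omega
  apply Finset.ext
  intro H'
  simp only [Finset.mem_image, Finset.mem_filter]
  constructor
  · rintro ⟨H, ⟨hHA, hHle⟩, rfl⟩
    rcases mem_interArr hHA with ⟨u, hu, rfl⟩ | ⟨a, b, n, hab, rfl⟩
    · have huj : u ≠ j := by
        intro h
        rw [h] at hu
        omega
      obtain ⟨u', hu'⟩ := Fin.exists_succAbove_eq huj
      rw [comap_ker_proj, ← hu', hT, proj_comp_secMap_succAbove]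
      simp only [id_eq]
      have hco : (u' : ℕ) = (u : ℕ) := by
        rcases succAbove_coe_or j u' with ⟨h1, h2⟩ | ⟨h1, h2⟩ <;> rw [hu'] at h2 <;> omega
      exact C_mem _ (by omega)
    · rw [comap_hypIJ]
      by_cases haj : a = j
      · subst haj
        have hbj : b ≠ a := ne_of_gt hab
        obtain ⟨b', hb'⟩ := Fin.exists_succAbove_eq hbj
        rw [← hb', hT, proj_comp_secMap_pivot, proj_comp_secMap_succAbove]
        simp only [id_eq]
        have hzz : zeta r ^ (r - 1) * zeta r ^ ((n : ℕ) + 1) = zeta r ^ (n : ℕ) := by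
          rw [← pow_add]
          have he : (r - 1) + ((n : ℕ) + 1) = (n : ℕ) + r := by omega
          rw [he, pow_add, zeta_pow_r hr0, mul_one]
        have key : (zeta r ^ (r - 1)) • (proj i' : (Fin (m + 1) → ℂ) →ₗ[ℂ] ℂ)
              - (zeta r ^ (n : ℕ)) • proj b'
            = (zeta r ^ (r - 1)) • ((proj i' : (Fin (m + 1) → ℂ) →ₗ[ℂ] ℂ)
              - (zeta r ^ ((n : ℕ) + 1)) • proj b') := by
          refine LinearMap.ext fun y => ?_
          simp only [LinearMap.sub_apply, LinearMap.smul_apply, LinearMap.proj_apply,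
            smul_eq_mul]
          linear_combination (y b') * hzz
        rw [key, LinearMap.ker_smul _ _ (pow_ne_zero _ zeta_ne_zero)]
        refine kerD_mem hr0 ?_ _
        intro h
        have hib : i = b := by rw [← hji', ← hb', h]
        exact absurd hib (ne_of_lt (lt_trans hij hab))
      · obtain ⟨a', ha'⟩ := Fin.exists_succAbove_eq haj
        by_cases hbj : b = j
        · subst hbj
          rw [← ha', hT, proj_comp_secMap_pivot, proj_comp_secMap_succAbove]
          simp only [id_eq]
          by_cases hai : a = i
          · have ha'i : a' = i' := by
              apply Fin.succAbove_right_injective (p := b)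
              show b.succAbove a' = b.succAbove i'
              rw [ha', hji', hai]
            rw [ha'i]
            by_cases hn1 : (n : ℕ) = 1
            · exfalso
              apply hHle
              rw [hai, hn1]
            · have hne : (1 : ℂ) - zeta r ^ ((n : ℕ) + (r - 1)) ≠ 0 := by
                rw [sub_ne_zero]
                intro h
                have hdvd := ((zeta_prim hr0).pow_eq_one_iff_dvd _).1 h.symm
                obtain ⟨c, hc⟩ := hdvd
                have hnr : (n : ℕ) < r := n.isLt
                rcases c with _ | _ | c
                · omega
                · omega
                · have h2 : r * 2 ≤ r * (c + 1 + 1) := Nat.mul_le_mul_left _ (by omega)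
                  omega
              have key : (proj i' : (Fin (m + 1) → ℂ) →ₗ[ℂ] ℂ)
                    - (zeta r ^ (n : ℕ)) • ((zeta r ^ (r - 1)) • proj i')
                  = (1 - zeta r ^ ((n : ℕ) + (r - 1)))
                      • (proj i' : (Fin (m + 1) → ℂ) →ₗ[ℂ] ℂ) := by
                refine LinearMap.ext fun y => ?_
                simp only [LinearMap.sub_apply, LinearMap.smul_apply, LinearMap.proj_apply,
                  smul_eq_mul]
                linear_combination (y i') * (pow_add (zeta r) (n : ℕ) (r - 1))
              rw [key, LinearMap.ker_smul _ _ hne]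
              exact C_mem i' (by omega)
          · have key : (proj a' : (Fin (m + 1) → ℂ) →ₗ[ℂ] ℂ)
                  - (zeta r ^ (n : ℕ)) • ((zeta r ^ (r - 1)) • proj i')
                = (proj a' : (Fin (m + 1) → ℂ) →ₗ[ℂ] ℂ)
                  - (zeta r ^ ((n : ℕ) + (r - 1))) • proj i' := by
              rw [smul_smul, ← pow_add]
            rw [key]
            refine kerD_mem hr0 ?_ _
            intro h
            apply hai
            rw [← ha', ← hji', h]
        · obtain ⟨b', hb'⟩ := Fin.exists_succAbove_eq hbj
          rw [← ha', ← hb', hT, proj_comp_secMap_succAbove, proj_comp_secMap_succAbove]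
          simp only [id_eq]
          refine kerD_mem hr0 ?_ _
          intro h
          exact (ne_of_lt hab) (by rw [← ha', ← hb', h])
  · intro hH'
    rcases mem_interArr hH' with ⟨u, hu, rfl⟩ | ⟨u, v, n, huv, rfl⟩
    · have hcomap : (LinearMap.ker (proj (j.succAbove u) : (Fin (m + 2) → ℂ) →ₗ[ℂ] ℂ)).comap T
          = LinearMap.ker (proj u : (Fin (m + 1) → ℂ) →ₗ[ℂ] ℂ) := by
        rw [comap_ker_proj, hT, proj_comp_secMap_succAbove]
        simp only [id_eq]
      refine ⟨_, ⟨C_mem (j.succAbove u) ?_, ?_⟩, hcomap⟩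
      · rcases succAbove_coe_or j u with ⟨h1, h2⟩ | ⟨h1, h2⟩ <;> omega
      · rw [hle_iff, hcomap]
        exact ker_proj_ne_top u
    · have hcomap : (hypIJ r (j.succAbove u) (j.succAbove v) (n : ℕ)).comap T
          = hypIJ r u v (n : ℕ) := by
        rw [comap_hypIJ, hT, proj_comp_secMap_succAbove, proj_comp_secMap_succAbove, hypIJ]
        simp only [id_eq]
      refine ⟨_, ⟨D_mem ((Fin.strictMono_succAbove j) huv) n.isLt, ?_⟩, hcomap⟩
      rw [hle_iff, hcomap, hypIJ]
      exact hyp_ne_top u v _ (ne_of_lt huv)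


lemma main2 (hr : 2 ≤ r) {k : ℕ} {i j : Fin (m + 2)} {k' j'' : Fin (m + 1)}
    (hij : i < j) (hki : k ≤ (i : ℕ)) (hk' : (k' : ℕ) = k)
    (hij'' : i.succAbove j'' = j) :
    ((interArr r (m + 2) k).filter fun H => ¬ hypIJ r i j 1 ≤ H).image
        (fun H => H.comap (secMap i (zeta r) k' (Equiv.swap k' j'')))
      = interArr r (m + 1) (k + 1) := by
  have hr0 : r ≠ 0 := by omega
  have hijn : (i : ℕ) < (j : ℕ) := hij
  set σ := Equiv.swap k' j'' with hσdef
  set T := secMap i (zeta r) k' σ with hT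
  have hj'' : (i : ℕ) ≤ (j'' : ℕ) ∧ ((j'' : ℕ) + 1 = (j : ℕ)) := by
    rcases succAbove_coe_or i j'' with ⟨h1, h2⟩ | ⟨h1, h2⟩ <;> rw [hij''] at h2 <;>
      constructor <;> omega
  have hTi : ∀ y, T y i = zeta r * y k' := fun y => secMap_pivot _ _ _ _ _
  have hTj : ∀ y, T y j = y k' := by
    intro y
    rw [← hij'', hT]
    rw [secMap_succAbove]
    rw [hσdef, Equiv.swap_apply_right]
  have hTmem : ∀ y, T y ∈ hypIJ r i j 1 := by
    intro y
    rw [mem_hypIJ, hTi, hTj, pow_one]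
    ring
  have hTsec : ∀ v ∈ hypIJ r i j 1, T (fun d => v (i.succAbove (σ d))) = v := by
    intro v hv
    rw [mem_hypIJ, pow_one] at hv
    show Fin.insertNth i (zeta r * v (i.succAbove (σ k')))
        (fun d => v (i.succAbove (σ (σ d)))) = v
    have hval : zeta r * v (i.succAbove (σ k')) = v i := by
      rw [hσdef, Equiv.swap_apply_left, hij'']
      linear_combination -hv
    rw [hval]
    have hσσ : (fun d => v (i.succAbove (σ (σ d)))) = fun d => v (i.succAbove d) := by
      funext d
      rw [hσdef, Equiv.swap_apply_self]
    rw [hσσ]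
    exact Fin.insertNth_self_removeNth i v
  have hle_iff : ∀ H : Submodule ℂ (Fin (m + 2) → ℂ),
      hypIJ r i j 1 ≤ H ↔ H.comap T = ⊤ :=
    fun H => le_iff_comap_top hTmem (fun v hv => ⟨_, hTsec v hv⟩)
  apply Finset.ext
  intro H'
  simp only [Finset.mem_image, Finset.mem_filter]
  constructor
  · rintro ⟨H, ⟨hHA, hHle⟩, rfl⟩
    rcases mem_interArr hHA with ⟨u, hu, rfl⟩ | ⟨a, b, n, hab, rfl⟩
    · have hui : u ≠ i := by
        intro h
        rw [h] at hu
        omega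
      obtain ⟨u', hu'⟩ := Fin.exists_succAbove_eq hui
      rw [comap_ker_proj, ← hu', hT, proj_comp_secMap_succAbove]
      have hu'c : (u' : ℕ) = (u : ℕ) := by
        rcases succAbove_coe_or i u' with ⟨h1, h2⟩ | ⟨h1, h2⟩ <;> rw [hu'] at h2 <;> omega
      have hσu : σ u' = u' := by
        rw [hσdef]
        apply Equiv.swap_apply_of_ne_of_ne
        · intro h
          rw [h] at hu'c
          omega
        · intro h
          rw [h] at hu'c
          omega
      rw [hσu]
      exact C_mem u' (by omega)
    · rw [comap_hypIJ]
      by_cases hai : a = i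
      · subst hai
        by_cases hbj : b = j
        · subst hbj
          rw [hT, proj_comp_secMap_pivot, ← hij'', proj_comp_secMap_succAbove, hσdef,
            Equiv.swap_apply_right]
          by_cases hn1 : (n : ℕ) = 1
          · exfalso
            apply hHle
            rw [hn1]
          · have hne : zeta r - zeta r ^ (n : ℕ) ≠ 0 := by
              rw [sub_ne_zero]
              intro h
              have h2 := (zeta_prim hr0).pow_inj (by omega : 1 < r) n.isLt
                (by rw [pow_one]; exact h)
              exact hn1 h2.symm
            have key : (zeta r) • (proj k' : (Fin (m + 1) → ℂ) →ₗ[ℂ] ℂ)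
                  - (zeta r ^ (n : ℕ)) • proj k'
                = (zeta r - zeta r ^ (n : ℕ)) • (proj k' : (Fin (m + 1) → ℂ) →ₗ[ℂ] ℂ) := by
              refine LinearMap.ext fun y => ?_
              simp only [LinearMap.sub_apply, LinearMap.smul_apply, LinearMap.proj_apply,
                smul_eq_mul]
              ring
            rw [key, LinearMap.ker_smul _ _ hne]
            exact C_mem k' (by omega)
        · have hbi : b ≠ a := ne_of_gt hab
          obtain ⟨b', hb'⟩ := Fin.exists_succAbove_eq hbi
          rw [hT, proj_comp_secMap_pivot, ← hb', proj_comp_secMap_succAbove]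
          have hb'j : b' ≠ j'' := by
            intro h
            apply hbj
            rw [← hb', h, hij'']
          have hσb : σ b' ≠ k' := by
            intro h
            apply hb'j
            apply σ.injective
            rw [h, hσdef, Equiv.swap_apply_right]
          have hzz : zeta r * zeta r ^ ((n : ℕ) + (r - 1)) = zeta r ^ (n : ℕ) := by
            calc zeta r * zeta r ^ ((n : ℕ) + (r - 1))
                = zeta r ^ (1 + ((n : ℕ) + (r - 1))) := by
                  rw [pow_add (zeta r) 1 ((n : ℕ) + (r - 1)), pow_one]
              _ = zeta r ^ ((n : ℕ) + r) := by congr 1; omega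
              _ = zeta r ^ (n : ℕ) := by rw [pow_add, zeta_pow_r hr0, mul_one]
          have key : (zeta r) • (proj k' : (Fin (m + 1) → ℂ) →ₗ[ℂ] ℂ)
                - (zeta r ^ (n : ℕ)) • proj (σ b')
              = (zeta r) • ((proj k' : (Fin (m + 1) → ℂ) →ₗ[ℂ] ℂ)
                - (zeta r ^ ((n : ℕ) + (r - 1))) • proj (σ b')) := by
            refine LinearMap.ext fun y => ?_
            simp only [LinearMap.sub_apply, LinearMap.smul_apply, LinearMap.proj_apply,
              smul_eq_mul]
            linear_combination (y (σ b')) * hzz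
          rw [key, LinearMap.ker_smul _ _ zeta_ne_zero]
          exact kerD_mem hr0 (Ne.symm hσb) _
      · by_cases hbi : b = i
        · subst hbi
          obtain ⟨a', ha'⟩ := Fin.exists_succAbove_eq (ne_of_lt hab)
          rw [hT, ← ha', proj_comp_secMap_succAbove, proj_comp_secMap_pivot]
          have key : (proj (σ a') : (Fin (m + 1) → ℂ) →ₗ[ℂ] ℂ)
                - (zeta r ^ (n : ℕ)) • ((zeta r) • proj k')
              = (proj (σ a') : (Fin (m + 1) → ℂ) →ₗ[ℂ] ℂ)
                - (zeta r ^ ((n : ℕ) + 1)) • proj k' := by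
            rw [smul_smul, ← pow_succ]
          rw [key]
          refine kerD_mem hr0 ?_ _
          intro h
          have ha'j : a' = j'' := by
            apply σ.injective
            rw [h, hσdef, Equiv.swap_apply_right]
          have : a = j := by rw [← ha', ha'j, hij'']
          exact (ne_of_lt (lt_trans hab hij)) this
        · obtain ⟨a', ha'⟩ := Fin.exists_succAbove_eq hai
          obtain ⟨b', hb'⟩ := Fin.exists_succAbove_eq hbi
          rw [hT, ← ha', ← hb', proj_comp_secMap_succAbove, proj_comp_secMap_succAbove]
          refine kerD_mem hr0 ?_ _
          intro h
          have : a' = b' := σ.injective h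
          apply ne_of_lt hab
          rw [← ha', ← hb', this]
  · intro hH'
    rcases mem_interArr hH' with ⟨u, hu, rfl⟩ | ⟨u, v, n, huv, rfl⟩
    · by_cases huk : (u : ℕ) < k
      · have hσu : σ u = u := by
          rw [hσdef]
          apply Equiv.swap_apply_of_ne_of_ne
          · intro h
            rw [h] at huk
            omega
          · intro h
            rw [h] at huk
            omega
        have hcomap : (LinearMap.ker
              (proj (i.succAbove u) : (Fin (m + 2) → ℂ) →ₗ[ℂ] ℂ)).comap T
            = LinearMap.ker (proj u : (Fin (m + 1) → ℂ) →ₗ[ℂ] ℂ) := by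
          rw [comap_ker_proj, hT, proj_comp_secMap_succAbove, hσu]
        refine ⟨_, ⟨C_mem (i.succAbove u) ?_, ?_⟩, hcomap⟩
        · rcases succAbove_coe_or i u with ⟨h1, h2⟩ | ⟨h1, h2⟩ <;> omega
        · rw [hle_iff, hcomap]
          exact ker_proj_ne_top u
      · have huk' : u = k' := Fin.ext (by omega)
        have hne : zeta r - 1 ≠ 0 := by
          rw [sub_ne_zero]
          intro h
          have h2 := (zeta_prim hr0).pow_inj (by omega : 1 < r) (by omega : 0 < r)
            (by rw [pow_one, pow_zero]; exact h)
          omega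
        have hcomap : (hypIJ r i j 0).comap T
            = LinearMap.ker (proj u : (Fin (m + 1) → ℂ) →ₗ[ℂ] ℂ) := by
          rw [comap_hypIJ, hT, proj_comp_secMap_pivot, ← hij'', proj_comp_secMap_succAbove,
            hσdef, Equiv.swap_apply_right]
          have key : (zeta r) • (proj k' : (Fin (m + 1) → ℂ) →ₗ[ℂ] ℂ)
                - (zeta r ^ (0 : ℕ)) • proj k'
              = (zeta r - 1) • (proj k' : (Fin (m + 1) → ℂ) →ₗ[ℂ] ℂ) := by
            refine LinearMap.ext fun y => ?_
            simp only [LinearMap.sub_apply, LinearMap.smul_apply, LinearMap.proj_apply,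
              smul_eq_mul, pow_zero]
            ring
          rw [key, LinearMap.ker_smul _ _ hne, huk']
        refine ⟨_, ⟨D_mem hij (by omega : (0 : ℕ) < r), ?_⟩, hcomap⟩
        rw [hle_iff, hcomap]
        exact ker_proj_ne_top u
    · have hgen : ∀ (d d' : Fin (m + 1)) (e : ℕ),
          (hypIJ r (i.succAbove (σ d)) (i.succAbove (σ d')) e).comap T
            = LinearMap.ker ((proj d : (Fin (m + 1) → ℂ) →ₗ[ℂ] ℂ)
                - (zeta r ^ e) • proj d') := by
        intro d d' e
        rw [comap_hypIJ, hT, proj_comp_secMap_succAbove, proj_comp_secMap_succAbove, hσdef,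
          Equiv.swap_apply_self, Equiv.swap_apply_self]
      have hab0 : i.succAbove (σ u) ≠ i.succAbove (σ v) := by
        intro h
        exact (ne_of_lt huv) (σ.injective (Fin.succAbove_right_injective (p := i) h))
      rcases lt_or_gt_of_ne hab0 with h | h
      · have hcomap : (hypIJ r (i.succAbove (σ u)) (i.succAbove (σ v)) (n : ℕ)).comap T
            = hypIJ r u v (n : ℕ) := by
          rw [hgen u v (n : ℕ), hypIJ]
        refine ⟨_, ⟨D_mem h n.isLt, ?_⟩, hcomap⟩
        rw [hle_iff, hcomap, hypIJ]
        exact hyp_ne_top u v _ (ne_of_lt huv)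
      · have hcomap : (hypIJ r (i.succAbove (σ v)) (i.succAbove (σ u))
              (((n : ℕ) * (r - 1)) % r)).comap T = hypIJ r u v (n : ℕ) := by
          rw [hgen v u _, zeta_pow_mod hr0, kerD_swap hr0 u v (n : ℕ), hypIJ]
        refine ⟨_, ⟨D_mem h (Nat.mod_lt _ (by omega)), ?_⟩, hcomap⟩
        rw [hle_iff, hcomap, hypIJ]
        exact hyp_ne_top u v _ (ne_of_lt huv)



end Aux

end ArrPaper

open ArrPaper in
/-- For `1 ≤ k ≤ ℓ - 1`: if `i ≤ k < j` (1-based), the restriction of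
`A^k_ℓ(r)` to `ker (x_i - ζ x_j)` (via the projection forgetting `x_j`) is
`A^k_{ℓ-1}(r)`; and if `k < i < j`, the restriction of `A^k_ℓ(r)` to
`ker (x_i - ζ x_j)` is isomorphic to `A^{k+1}_{ℓ-1}(r)`.
(Here `ℓ = m + 2`, indices 0-based.) -/
theorem stmt10 (r m k : ℕ) (hr : 2 ≤ r) (hk1 : 1 ≤ k) (hk2 : k ≤ m + 1) :
    (∀ i j : Fin (m + 2), i < j → (i : ℕ) < k → k ≤ (j : ℕ) →
      ((interArr r (m + 2) k).filter fun H => ¬ hypIJ r i j 1 ≤ H).image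
          (fun H => (H ⊓ hypIJ r i j 1).map
            (LinearMap.funLeft ℂ ℂ (Fin.succAbove j) :
              (Fin (m + 2) → ℂ) →ₗ[ℂ] (Fin (m + 1) → ℂ)))
        = interArr r (m + 1) k) ∧
    (∀ i j : Fin (m + 2), i < j → k ≤ (i : ℕ) →
      ∃ e : hypIJ r i j 1 ≃ₗ[ℂ] (Fin (m + 1) → ℂ),
        restrictTo (interArr r (m + 2) k) (hypIJ r i j 1) e
          = interArr r (m + 1) (k + 1)) := by
  have hr0 : r ≠ 0 := by omega
  have hz1 : zeta r ^ 1 * zeta r ^ (r - 1) = 1 := by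
    rw [← pow_add]
    have he : 1 + (r - 1) = r := by omega
    rw [he, zeta_pow_r hr0]
  constructor
  · intro i j hij hik hkj
    have hijn : (i : ℕ) < (j : ℕ) := hij
    have hjm : (j : ℕ) < m + 2 := j.isLt
    set i' : Fin (m + 1) := ⟨(i : ℕ), by omega⟩ with hi'def
    have hji' : j.succAbove i' = i := by
      rw [Fin.succAbove_of_castSucc_lt]
      · exact Fin.ext (by simp [hi'def])
      · rw [Fin.lt_def]
        simpa [hi'def] using hijn
    set T := secMap j (zeta r ^ (r - 1)) i' id with hT
    have hTi : ∀ y, T y i = y i' := by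
      intro y
      rw [← hji', hT]
      exact secMap_succAbove _ _ _ _ _ _
    have hTj : ∀ y, T y j = zeta r ^ (r - 1) * y i' := fun y => secMap_pivot _ _ _ _ _
    have hTmem : ∀ y, T y ∈ hypIJ r i j 1 := by
      intro y
      rw [mem_hypIJ, hTi, hTj]
      linear_combination (-(y i')) * hz1
    have hTsec : ∀ v ∈ hypIJ r i j 1, T (fun d => v (j.succAbove d)) = v := by
      intro v hv
      rw [mem_hypIJ] at hv
      have hval : zeta r ^ (r - 1) * v i = v j := by
        linear_combination (zeta r ^ (r - 1)) * hv + (v j) * hz1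
      show Fin.insertNth j (zeta r ^ (r - 1) * v (j.succAbove i'))
          (fun d => v (j.succAbove d)) = v
      rw [hji', hval]
      exact Fin.insertNth_self_removeNth j v
    have hπT : ∀ y, (LinearMap.funLeft ℂ ℂ (Fin.succAbove j) :
        (Fin (m + 2) → ℂ) →ₗ[ℂ] (Fin (m + 1) → ℂ)) (T y) = y := by
      intro y
      funext d
      show T y (j.succAbove d) = y d
      rw [hT]
      exact secMap_succAbove _ _ _ _ _ _
    have himg : ∀ H ∈ (interArr r (m + 2) k).filter fun H => ¬ hypIJ r i j 1 ≤ H,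
        (H ⊓ hypIJ r i j 1).map (LinearMap.funLeft ℂ ℂ (Fin.succAbove j) :
            (Fin (m + 2) → ℂ) →ₗ[ℂ] (Fin (m + 1) → ℂ)) = H.comap T := by
      intro H _
      exact map_inf_eq _ T (hypIJ r i j 1) H hTmem (fun v hv => hTsec v hv) hπT
    rw [Finset.image_congr (fun H hH => himg H hH)]
    exact main1 hr hij hik hkj hji'
  · intro i j hij hki
    have hijn : (i : ℕ) < (j : ℕ) := hij
    have hjm : (j : ℕ) < m + 2 := j.isLt
    have him : (i : ℕ) < m + 1 := by omega
    set k' : Fin (m + 1) := ⟨k, by omega⟩ with hk'def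
    set j'' : Fin (m + 1) := ⟨(j : ℕ) - 1, by omega⟩ with hj''def
    have hij'' : i.succAbove j'' = j := by
      rw [Fin.succAbove_of_le_castSucc]
      · refine Fin.ext ?_
        rw [Fin.val_succ]
        simp [hj''def]
        omega
      · rw [Fin.le_def]
        simp [hj''def]
        omega
    set σ := Equiv.swap k' j'' with hσdef
    set T := secMap i (zeta r) k' σ with hT
    have hTi : ∀ y, T y i = zeta r * y k' := fun y => secMap_pivot _ _ _ _ _
    have hTj : ∀ y, T y j = y k' := by
      intro y
      rw [← hij'', hT, secMap_succAbove, hσdef, Equiv.swap_apply_right]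
    have hTmem : ∀ y, T y ∈ hypIJ r i j 1 := by
      intro y
      rw [mem_hypIJ, hTi, hTj, pow_one]
      ring
    have hTsec : ∀ v ∈ hypIJ r i j 1, T (fun d => v (i.succAbove (σ d))) = v := by
      intro v hv
      rw [mem_hypIJ, pow_one] at hv
      show Fin.insertNth i (zeta r * v (i.succAbove (σ k')))
          (fun d => v (i.succAbove (σ (σ d)))) = v
      have hval : zeta r * v (i.succAbove (σ k')) = v i := by
        rw [hσdef, Equiv.swap_apply_left, hij'']
        linear_combination -hv
      rw [hval]
      have hσσ : (fun d => v (i.succAbove (σ (σ d)))) = fun d => v (i.succAbove d) := by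
        funext d
        rw [hσdef, Equiv.swap_apply_self]
      rw [hσσ]
      exact Fin.insertNth_self_removeNth i v
    set B : (Fin (m + 2) → ℂ) →ₗ[ℂ] (Fin (m + 1) → ℂ) :=
      LinearMap.funLeft ℂ ℂ (fun d => i.succAbove (σ d)) with hB
    set E := B.comp (hypIJ r i j 1).subtype with hE
    set S := T.codRestrict (hypIJ r i j 1) hTmem with hS
    have h1 : E.comp S = LinearMap.id := by
      refine LinearMap.ext fun y => ?_
      funext d
      show T y (i.succAbove (σ d)) = y d
      rw [hT, secMap_succAbove, hσdef, Equiv.swap_apply_self]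
    have h2 : S.comp E = LinearMap.id := by
      refine LinearMap.ext fun v => ?_
      apply Subtype.ext
      show T (B (v : Fin (m + 2) → ℂ)) = (v : Fin (m + 2) → ℂ)
      exact hTsec _ v.2
    refine ⟨LinearEquiv.ofLinear E S h1 h2, ?_⟩
    unfold restrictTo
    have himg : ∀ H ∈ (interArr r (m + 2) k).filter fun H => ¬ hypIJ r i j 1 ≤ H,
        (H.comap (hypIJ r i j 1).subtype).map
            (LinearEquiv.ofLinear E S h1 h2).toLinearMap = H.comap T := by
      intro H _
      ext x
      simp only [Submodule.mem_map, Submodule.mem_comap]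
      constructor
      · rintro ⟨v, hv, rfl⟩
        have hv' : T ((LinearEquiv.ofLinear E S h1 h2).toLinearMap v)
            = (v : Fin (m + 2) → ℂ) := by
          show T (B (v : Fin (m + 2) → ℂ)) = (v : Fin (m + 2) → ℂ)
          exact hTsec _ v.2
        rw [hv']
        exact hv
      · intro hx
        refine ⟨S x, hx, ?_⟩
        exact LinearMap.congr_fun h1 x
    rw [Finset.image_congr (fun H hH => himg H hH)]
    exact main2 hr hij hki (by rw [hk'def]) hij''
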